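/- The coefficients K_{s,i} and dblK_{s,i} satisfy, with t = ⌊(s−2)/2⌋: (i) K_{3,i} = 2i+2 and K_{4,i} = 10·2^i − 4(i+2) for all i ≥ 1; (ii) for every r ≥ 2, dblK_{3,i} ≤ 6·C(i+1,2) + 4·6^{r−1}·(i+1) and dblK_{4,i} ≤ 20·(6^{r−1}+2)·2^i; (iii) there exists a constant C (depending on s and r) such that K_{5,i}, dblK_{5,i} ≤ 2^i·(i+C)!; (iv) for every even s ≥ 4 there exists a constant C with K_{s,i}, dblK_{s,i} ≤ 2^{C(i+C, t)}; (v) for every odd s ≥ 5 there exists a constant C with K_{s,i}, dblK_{s,i} ≤ 2^{C(i+C, t)·(log₂(i+1)+C)}. Here C(a,b) denotes the binomial coefficient. -/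

import Mathlib

/-! ## Basic definitions for generalized Davenport-Schinzel sequences -/

/-- `σ` is contained in `S`: `S` has a subsequence equal to `σ`
after an injective renaming of symbols. -/
def SeqContains (σ S : List ℕ) : Prop :=
  ∃ f : ℕ → ℕ, (∀ a ∈ σ, ∀ b ∈ σ, f a = f b → a = b) ∧ (σ.map f).Sublist S

/-- `S` avoids every member of the family `P`. -/
def FamFree (P : Set (List ℕ)) (S : List ℕ) : Prop := ∀ σ ∈ P, ¬ SeqContains σ S

/-- `S` is `k`-sparse: equal entries are at least `k` positions apart. -/
def Sparse (k : ℕ) (S : List ℕ) : Prop :=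
  ∀ i j : Fin S.length, (i : ℕ) < (j : ℕ) → S.get i = S.get j → (i : ℕ) + k ≤ (j : ℕ)

/-- `S` is a concatenation of at most `m` blocks (sequences of distinct symbols). -/
def BlockPartition (S : List ℕ) (m : ℕ) : Prop :=
  ∃ Bs : List (List ℕ), Bs.length ≤ m ∧ (∀ B ∈ Bs, B.Nodup) ∧ S = Bs.flatten

/-- `Ex(P, n)` for `r`-sparse sequences: maximum length of an `r`-sparse `P`-free sequence
over an alphabet of at most `n` symbols. -/
noncomputable def ExS (P : Set (List ℕ)) (r n : ℕ) : ℕ :=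
  sSup {L : ℕ | ∃ S : List ℕ, FamFree P S ∧ S.toFinset.card ≤ n ∧ Sparse r S ∧ S.length = L}

/-- `Ex(P, n, m)`: maximum length of a `P`-free sequence over an alphabet of at most `n`
symbols partitioned into at most `m` blocks. -/
noncomputable def ExB (P : Set (List ℕ)) (n m : ℕ) : ℕ :=
  sSup {L : ℕ | ∃ S : List ℕ, FamFree P S ∧ S.toFinset.card ≤ n ∧ BlockPartition S m ∧ S.length = L}

/-- `Ex(σ, n)` for a single forbidden sequence `σ`, with the `‖σ‖`-sparseness convention. -/
noncomputable def ExSeq (σ : List ℕ) (n : ℕ) : ℕ := ExS {σ} σ.toFinset.card n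

/-- `Ex(σ, n, m)` for a single forbidden sequence `σ`. -/
noncomputable def ExSeqB (σ : List ℕ) (n m : ℕ) : ℕ := ExB {σ} n m

/-- `B` is a permutation of `{1, …, r}` listed as a sequence. -/
def IsPermBlock (r : ℕ) (B : List ℕ) : Prop :=
  B.Nodup ∧ B.toFinset = Finset.Icc 1 r

/-- `B` contains exactly two occurrences of each symbol of `{1, …, r}` and nothing else. -/
def IsDoubleBlock (r : ℕ) (B : List ℕ) : Prop :=
  ∀ a : ℕ, B.count a = if a ∈ Finset.Icc 1 r then 2 else 0

/-- `Perm_{r,k}`: all concatenations of `k` permutations of `{1, …, r}`. -/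
def PermFam (r k : ℕ) : Set (List ℕ) :=
  {S | ∃ Bs : List (List ℕ), Bs.length = k ∧ (∀ B ∈ Bs, IsPermBlock r B) ∧ S = Bs.flatten}

/-- `dblPerm_{r,k}`: sequences `σ₁σ₂⋯σ_k` over `{1, …, r}` where `σ₁, σ_k` are permutations
of `{1, …, r}` and `σ₂, …, σ_{k-1}` contain exactly two occurrences of every symbol. -/
def DblPermFam (r k : ℕ) : Set (List ℕ) :=
  {S | ∃ (F L : List ℕ) (Ms : List (List ℕ)),
      IsPermBlock r F ∧ IsPermBlock r L ∧ Ms.length = k - 2 ∧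
      (∀ B ∈ Ms, IsDoubleBlock r B) ∧ S = F ++ Ms.flatten ++ L}

/-- Doubling of the inner part: every entry doubled except the last. -/
def dblMid : List ℕ → List ℕ
  | [] => []
  | [a] => [a]
  | a :: b :: rest => a :: a :: dblMid (b :: rest)

/-- `dbl σ`: double every occurrence of `σ` except the first and the last. -/
def dbl : List ℕ → List ℕ
  | [] => []
  | a :: rest => a :: dblMid rest

/-- The alternating sequence `1 2 1 2 ⋯` of length `L`. -/
def altSeq (L : ℕ) : List ℕ := (List.range L).map (fun i => i % 2 + 1)

/-- `upSeq a b = a (a+1) ⋯ b`. -/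
def upSeq (a b : ℕ) : List ℕ := List.range' a (b + 1 - a)

/-- `downSeq a b = b (b-1) ⋯ a`. -/
def downSeq (a b : ℕ) : List ℕ := (List.range' a (b + 1 - a)).reverse

/-- The M-shaped sequence `M_k = 1⋯(k+1) k⋯1 2⋯(k+1) k⋯1`. -/
def Mseq (k : ℕ) : List ℕ := upSeq 1 (k+1) ++ downSeq 1 k ++ upSeq 2 (k+1) ++ downSeq 1 k

/-- The zig-zag sequence `Z_k = 1⋯(k+1) k⋯1 2⋯(k+1) k⋯1 2⋯(k+1)`. -/
def Zseq (k : ℕ) : List ℕ :=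
  upSeq 1 (k+1) ++ downSeq 1 k ++ upSeq 2 (k+1) ++ downSeq 1 k ++ upSeq 2 (k+1)

/-- The one-sided comb `C_k = 1 2 ⋯ (k+2) 1 (k+2) 2 (k+2) ⋯ (k+1) (k+2)`. -/
def Cseq (k : ℕ) : List ℕ :=
  upSeq 1 (k+2) ++ (List.range' 1 (k+1)).flatMap (fun a => [a, k+2])

/-- Order-`s` Davenport-Schinzel extremal function `DS_s(n)`. -/
noncomputable def DS (s n : ℕ) : ℕ := ExSeq (altSeq (s+2)) n

/-- Blocked version `DS_s(n,m)`. -/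
noncomputable def DSB (s n m : ℕ) : ℕ := ExSeqB (altSeq (s+2)) n m

/-- Order-`s` double DS extremal function `dblDS_s(n)`. -/
noncomputable def dblDS (s n : ℕ) : ℕ := ExSeq (dbl (altSeq (s+2))) n

/-- Blocked version `dblDS_s(n,m)`. -/
noncomputable def dblDSB (s n m : ℕ) : ℕ := ExSeqB (dbl (altSeq (s+2))) n m

/-- `PERM_{r,s}(n) = Ex(Perm_{r,s+1}, n)`. -/
noncomputable def PERM (r s n : ℕ) : ℕ := ExS (PermFam r (s+1)) r n

/-- `PERM_{r,s}(n,m) = Ex(Perm_{r,s+1}, n, m)`. -/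
noncomputable def PERMB (r s n m : ℕ) : ℕ := ExB (PermFam r (s+1)) n m

/-- `dblPERM_{r,s}(n) = Ex(dblPerm_{r,s+1}, n)`. -/
noncomputable def dblPERM (r s n : ℕ) : ℕ := ExS (DblPermFam r (s+1)) r n

/-- `dblPERM_{r,s}(n,m) = Ex(dblPerm_{r,s+1}, n, m)`. -/
noncomputable def dblPERMB (r s n m : ℕ) : ℕ := ExB (DblPermFam r (s+1)) n m

/-- Ackermann's function `a_{i,j}`: `a_{1,j} = 2^j`, `a_{i,1} = 2` for `i ≥ 2`, and
`a_{i,j} = w ⬝ a_{i-1,w}` with `w = a_{i,j-1}` for `i, j ≥ 2`. -/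
def ackF : ℕ → ℕ → ℕ
  | 0, _ => 0
  | 1, j => 2 ^ j
  | _+2, 0 => 2
  | _+2, 1 => 2
  | i+2, j+2 => ackF (i+2) (j+1) * ackF (i+1) (ackF (i+2) (j+1))
  termination_by i j => (i, j)

/-- The inverse Ackermann function `α(n,m) = min {i ≥ 1 : a_{i,j} ≥ m}`
where `j = max(⌈n/m⌉, 3)`. -/
noncomputable def alphaAck (n m : ℕ) : ℕ :=
  sInf {i : ℕ | 1 ≤ i ∧ m ≤ ackF i (max ((n + m - 1) / m) 3)}

/-- `α(n) = α(n,n)`. -/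
noncomputable def alphaN (n : ℕ) : ℕ := alphaAck n n
/-- The coefficients `K_{s,i}` (for `i ≥ 1`; the value at `i = 0` is set to that at `i = 1`). -/
def Kc : ℕ → ℕ → ℕ
  | 0, _ => 1
  | 1, _ => 1
  | 2, _ => 2
  | s+3, 0 => 2 ^ (s+2)
  | s+3, 1 => 2 ^ (s+2)
  | s+3, i+2 => 2 * Kc (s+2) (i+2) + Kc (s+1) (i+2) * (Kc (s+3) (i+1) - 2)
  termination_by s i => (s, i)

/-- The coefficients `dblK_{s,i}` (for `i ≥ 1`; the value at `i = 0` is set to that at `i = 1`). -/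
def dblKc (r : ℕ) : ℕ → ℕ → ℕ
  | 0, _ => 1
  | 1, _ => 1
  | 2, _ => 2 * 6 ^ (r-1)
  | s+3, 0 => 2 * dblKc r (s+2) 0 + 1
  | s+3, 1 => 2 * dblKc r (s+2) 1 + 1
  | s+3, i+2 => dblKc r (s+3) (i+1) + 2 * dblKc r (s+2) (i+2)
      + (dblKc r (s+1) (i+2) + 2) * Kc (s+3) (i+1)
  termination_by s i => (s, i)

/-- The multiplicities `μ_{s,i}`: `μ_{2,i} = 2`, `μ_{3,i} = i+1`, `μ_{s,0} = 1` for `s ≥ 4`,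
and `μ_{s,i} = μ_{s,i-1} ⬝ μ_{s-2,i}` for `s ≥ 4`, `i ≥ 1`. -/
def muC : ℕ → ℕ → ℕ
  | 0, _ => 1
  | 1, _ => 1
  | 2, _ => 2
  | 3, i => i + 1
  | s+4, 0 => 1
  | s+4, i+1 => muC (s+4) i * muC (s+2) (i+1)
  termination_by s i => (s, i)

namespace KDK

lemma Kc_step (s i : ℕ) : Kc (s+3) (i+2) = 2 * Kc (s+2) (i+2) + Kc (s+1) (i+2) * (Kc (s+3) (i+1) - 2) := by rw [Kc]
lemma Kc_one (s : ℕ) : Kc (s+3) 1 = 2 ^ (s+2) := by rw [Kc]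
lemma Kc_2 (i : ℕ) : Kc 2 i = 2 := by rw [Kc]
lemma Kc_1 (i : ℕ) : Kc 1 i = 1 := by rw [Kc]
lemma dblKc_step (r s i : ℕ) : dblKc r (s+3) (i+2) = dblKc r (s+3) (i+1) + 2 * dblKc r (s+2) (i+2) + (dblKc r (s+1) (i+2) + 2) * Kc (s+3) (i+1) := by rw [dblKc]
lemma dblKc_one (r s : ℕ) : dblKc r (s+3) 1 = 2 * dblKc r (s+2) 1 + 1 := by rw [dblKc]
lemma dblKc_2 (r i : ℕ) : dblKc r 2 i = 2 * 6 ^ (r-1) := by rw [dblKc]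
lemma dblKc_1 (r i : ℕ) : dblKc r 1 i = 1 := by rw [dblKc]

lemma two_pow_ge (n : ℕ) : n + 1 ≤ 2 ^ n := Nat.lt_two_pow_self (n := n)

/-- Part (i), first half. -/
lemma K3 : ∀ i, 1 ≤ i → Kc 3 i = 2 * i + 2 := by
  intro i hi
  induction i, hi using Nat.le_induction with
  | base => have := Kc_one 0; norm_num at this ⊢; omega
  | succ i hi ih =>
    obtain ⟨j, rfl⟩ : ∃ j, i = j + 1 := ⟨i - 1, by omega⟩
    rw [show j+1+1 = j+2 by omega]
    have h := Kc_step 0 j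
    norm_num [Kc_2, Kc_1] at h
    rw [ih] at h
    omega

/-- Part (i), second half, in subtraction-free form. -/
lemma K4sum : ∀ i, 1 ≤ i → Kc 4 i + 4 * (i + 2) = 10 * 2 ^ i := by
  intro i hi
  induction i, hi using Nat.le_induction with
  | base => have := Kc_one 1; norm_num at this ⊢; omega
  | succ i hi ih =>
    obtain ⟨j, rfl⟩ : ∃ j, i = j + 1 := ⟨i - 1, by omega⟩
    rw [show j+1+1 = j+2 by omega, show (2:ℕ)^(j+2) = 2*2^(j+1) by ring]
    have h := Kc_step 1 j
    norm_num [Kc_2] at h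
    rw [K3 (j+2) (by omega)] at h
    have hq : j + 2 ≤ 2 ^ (j+1) := two_pow_ge (j+1)
    generalize hP : (2:ℕ) ^ (j+1) = P at *
    omega

lemma K4 : ∀ i, 1 ≤ i → Kc 4 i = 10 * 2 ^ i - 4 * (i + 2) := by
  intro i hi; have := K4sum i hi; omega

lemma K4_le (i : ℕ) : 1 ≤ i → Kc 4 i ≤ 10 * 2 ^ i := by
  intro hi; have := K4sum i hi; omega

lemma K3_ge (i : ℕ) (hi : 1 ≤ i) : 2 ≤ Kc 3 i := by rw [K3 i hi]; omega
lemma K4_ge (i : ℕ) (hi : 1 ≤ i) : 2 ≤ Kc 4 i := by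
  have := K4sum i hi; have := two_pow_ge i
  generalize hP : (2:ℕ) ^ i = P at *; omega

/-- `6 * (n+1).choose 2 = 3*n*(n+1)`. -/
lemma six_choose_two : ∀ n, 6 * (n+1).choose 2 = 3 * (n * (n+1)) := by
  intro n
  induction n with
  | zero => norm_num
  | succ n ih =>
    have h2 : (n+2).choose 2 = (n+1).choose 1 + (n+1).choose 2 := Nat.choose_succ_succ' (n+1) 1
    rw [Nat.choose_one_right] at h2
    have h3 : 3 * ((n+1) * (n+2)) = 3 * (n * (n+1)) + 6 * (n+1) := by ring
    rw [show n+1+1 = n+2 by omega]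
    omega

/-- Part (ii), first half. -/
lemma dblK3_le (r : ℕ) : ∀ i, 1 ≤ i →
    dblKc r 3 i ≤ 6 * (i + 1).choose 2 + 4 * 6 ^ (r - 1) * (i + 1) := by
  intro i hi
  set A := 6 ^ (r-1) with hA
  induction i, hi using Nat.le_induction with
  | base =>
    have h1 := dblKc_one r 0
    norm_num [dblKc_2] at h1 ⊢
    omega
  | succ i hi ih =>
    obtain ⟨j, rfl⟩ : ∃ j, i = j + 1 := ⟨i - 1, by omega⟩
    rw [show j+1+1 = j+2 by omega, show j+2+1 = j+3 by omega]
    rw [show j+1+1 = j+2 by omega] at ih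
    have h := dblKc_step r 0 j
    norm_num [dblKc_2, dblKc_1] at h
    rw [K3 (j+1) (by omega)] at h
    have hc : (j+3).choose 2 = (j+2).choose 2 + (j+2) := by
      have h2 := Nat.choose_succ_succ' (j+2) 1
      rw [Nat.choose_one_right] at h2
      rw [show j+2+1 = j+3 by omega] at h2
      norm_num at h2
      omega
    have hl : 4 * A * (j+3) = 4 * A * (j+2) + 4 * A := by ring
    generalize (j+2).choose 2 = c at *
    generalize (j+3).choose 2 = c' at *
    generalize 4 * A * (j+2) = v at *
    generalize 4 * A * (j+3) = v' at *
    omega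

lemma quad_le_pow (j : ℕ) : 3 * ((j+2) * (j+3)) ≤ 10 * 2 ^ (j+1) := by
  induction j with
  | zero => norm_num
  | succ n ih =>
    rw [show n+1+2 = n+3 by omega, show n+1+3 = n+4 by omega,
      show (2:ℕ)^(n+1+1) = 2*2^(n+1) by ring]
    have h1 : 3 * ((n+3) * (n+4)) ≤ 2 * (3 * ((n+2) * (n+3))) := by nlinarith
    omega

/-- Part (ii), second half. -/
lemma dblK4_le (r : ℕ) : ∀ i, 1 ≤ i →
    dblKc r 4 i ≤ 20 * (6 ^ (r - 1) + 2) * 2 ^ i := by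
  intro i hi
  set A := 6 ^ (r-1) with hA
  induction i, hi using Nat.le_induction with
  | base =>
    have h1 := dblKc_one r 1
    have h2 := dblKc_one r 0
    norm_num [dblKc_2] at h1 h2 ⊢
    omega
  | succ i hi ih =>
    obtain ⟨j, rfl⟩ : ∃ j, i = j + 1 := ⟨i - 1, by omega⟩
    rw [show j+1+1 = j+2 by omega]
    have h := dblKc_step r 1 j
    norm_num [dblKc_2, ← hA] at h
    have h3 : dblKc r 3 (j+2) ≤ 3 * ((j+2) * (j+3)) + 4 * (A * (j + 3)) := by
      have h5 := dblK3_le r (j+2) (by omega)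
      have h6 := six_choose_two (j+2)
      rw [← hA] at h5
      rw [show j+2+1 = j+3 by omega] at h5 h6
      have h7 : 4 * A * (j+3) = 4 * (A * (j+3)) := by ring
      omega
    have h4 := K4sum (j+1) (by omega)
    rw [show j+1+2 = j+3 by omega] at h4
    have hq : 3 * ((j+2) * (j+3)) ≤ 10 * 2 ^ (j+1) := quad_le_pow j
    -- linearize all the products
    have e1 : A * Kc 4 (j+1) + 4 * (A * (j+3)) = 10 * (A * 2 ^ (j+1)) := by
      have : A * (Kc 4 (j+1) + 4 * (j+3)) = A * (10 * 2 ^ (j+1)) := by rw [h4]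
      ring_nf at this ⊢
      omega
    have e2 : (2 * A + 2) * Kc 4 (j+1) = 2 * (A * Kc 4 (j+1)) + 2 * Kc 4 (j+1) := by ring
    have e3 : 20 * (A + 2) * 2 ^ (j+2) = 40 * (A * 2 ^ (j+1)) + 80 * 2 ^ (j+1) := by ring
    have e4 : 20 * (A + 2) * 2 ^ (j+1) = 20 * (A * 2 ^ (j+1)) + 40 * 2 ^ (j+1) := by ring
    generalize A * Kc 4 (j+1) = w at *
    generalize A * 2 ^ (j+1) = u at *
    generalize A * (j+3) = v at *
    generalize (j+2) * (j+3) = m at *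
    generalize Kc 4 (j+1) = k at *
    generalize (2:ℕ) ^ (j+1) = P at *
    omega

end KDK
namespace KDK

lemma two_pow_add_le {a b c : ℕ} (ha : a + 1 ≤ c) (hb : b + 1 ≤ c) :
    2^a + 2^b ≤ 2^c := by
  obtain ⟨e, rfl⟩ : ∃ e, c = e + 1 := ⟨c-1, by omega⟩
  have h1 : (2:ℕ)^a ≤ 2^e := Nat.pow_le_pow_right (by norm_num) (by omega)
  have h2 : (2:ℕ)^b ≤ 2^e := Nat.pow_le_pow_right (by norm_num) (by omega)
  have h3 : (2:ℕ)^(e+1) = 2^e + 2^e := by ring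
  omega

lemma two_pow_add3_le {a b d c : ℕ} (ha : a + 2 ≤ c) (hb : b + 2 ≤ c) (hd : d + 2 ≤ c) :
    2^a + 2^b + 2^d ≤ 2^c := by
  obtain ⟨e, rfl⟩ : ∃ e, c = e + 2 := ⟨c-2, by omega⟩
  have h1 : (2:ℕ)^a ≤ 2^e := Nat.pow_le_pow_right (by norm_num) (by omega)
  have h2 : (2:ℕ)^b ≤ 2^e := Nat.pow_le_pow_right (by norm_num) (by omega)
  have h3 : (2:ℕ)^d ≤ 2^e := Nat.pow_le_pow_right (by norm_num) (by omega)
  have h4 : (2:ℕ)^(e+2) = 2^e + 2^e + 2^e + 2^e := by ring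
  have h0 : 1 ≤ (2:ℕ)^e := Nat.one_le_two_pow
  omega

lemma le_choose_add : ∀ k n : ℕ, n ≤ (n + k).choose (k+1) := by
  intro k
  induction k with
  | zero => intro n; simp
  | succ k ih =>
    intro n
    have hp : (n+k+1).choose (k+1+1) = (n+k).choose (k+1) + (n+k).choose (k+1+1) :=
      Nat.choose_succ_succ' (n+k) (k+1)
    have := ih n
    rw [show n+(k+1) = n+k+1 by omega]
    omega

/-- `choose m t ≥ m - t + 1` in omega-friendly form. -/
lemma choose_ge (m t : ℕ) (ht : 1 ≤ t) (htm : t ≤ m) : m + 1 ≤ m.choose t + t := by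
  obtain ⟨u, rfl⟩ : ∃ u, t = u + 1 := ⟨t-1, by omega⟩
  have h := le_choose_add u (m - u)
  rw [show m - u + u = m by omega] at h
  omega

lemma choose_pos' (m t : ℕ) (htm : t ≤ m) : 1 ≤ m.choose t := Nat.choose_pos htm

lemma choose_add_ge (n t : ℕ) (ht : 1 ≤ t) (htn : t ≤ n) :
    ∀ d, n.choose t + d ≤ (n + d).choose t := by
  intro d
  induction d with
  | zero => simp
  | succ d ih =>
    obtain ⟨u, rfl⟩ : ∃ u, t = u + 1 := ⟨t-1, by omega⟩
    have hp : (n+d+1).choose (u+1) = (n+d).choose u + (n+d).choose (u+1) :=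
      Nat.choose_succ_succ' (n+d) u
    have hpos : 1 ≤ (n+d).choose u := choose_pos' _ _ (by omega)
    rw [show n+(d+1) = n+d+1 by omega, hp]
    omega

lemma sq_le_two_pow : ∀ n, 5 ≤ n → n * n ≤ 2 ^ n := by
  intro n hn
  induction n, hn using Nat.le_induction with
  | base => norm_num
  | succ n hn ih =>
    have h1 : (n+1)*(n+1) ≤ 2*(n*n) := by nlinarith
    have h2 : (2:ℕ)^(n+1) = 2*2^n := by ring
    omega

/-- Key log inequality: `t·log₂(i+1) ≤ i + 2t² + 4t`. -/
lemma log_linear (t i : ℕ) (hi : 1 ≤ i) : t * Nat.log 2 (i+1) ≤ i + 2*(t*t) + 4*t := by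
  set L := Nat.log 2 (i+1) with hL
  by_cases hc : L ≤ 2*t+4
  · have h1 : t * L ≤ t * (2*t+4) := Nat.mul_le_mul_left t hc
    have h2 : t * (2*t+4) = 2*(t*t) + 4*t := by ring
    omega
  · push_neg at hc
    have hsq : L * L ≤ 2 ^ L := sq_le_two_pow L (by omega)
    have hpl : 2 ^ L ≤ i+1 := Nat.pow_log_le_self 2 (by omega)
    have h1 : 2*(t*L) ≤ L*L := by
      calc 2*(t*L) = (2*t)*L := by ring
      _ ≤ L*L := Nat.mul_le_mul_right L (by omega)
    omega

lemma log_mul_le (a b : ℕ) (ha : 1 ≤ a) (hb : 1 ≤ b) :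
    Nat.log 2 (a*b) ≤ Nat.log 2 a + Nat.log 2 b + 1 := by
  have h1 : a < 2 ^ (Nat.log 2 a + 1) := Nat.lt_pow_succ_log_self (by norm_num) a
  have h2 : b < 2 ^ (Nat.log 2 b + 1) := Nat.lt_pow_succ_log_self (by norm_num) b
  have h3 : a * b < 2 ^ (Nat.log 2 a + Nat.log 2 b + 2) := by
    calc a * b < 2 ^ (Nat.log 2 a + 1) * 2 ^ (Nat.log 2 b + 1) :=
      Nat.mul_lt_mul'' h1 h2
    _ = 2 ^ (Nat.log 2 a + Nat.log 2 b + 2) := by rw [← pow_add]; ring_nf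
  have := Nat.log_lt_of_lt_pow (show a*b ≠ 0 by positivity) h3
  omega

lemma log_succ_le (n : ℕ) (hn : 1 ≤ n) : Nat.log 2 (n+1) ≤ Nat.log 2 n + 1 := by
  have h1 : n < 2 ^ (Nat.log 2 n + 1) := Nat.lt_pow_succ_log_self (by norm_num) n
  have h3 : n + 1 < 2 ^ (Nat.log 2 n + 2) := by
    have h2 : (2:ℕ) ^ (Nat.log 2 n + 2) = 2 * 2 ^ (Nat.log 2 n + 1) := by ring
    omega
  have := Nat.log_lt_of_lt_pow (show n+1 ≠ 0 by omega) h3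
  omega

/-- Part (iii) for `K`. -/
lemma K5_le : ∀ i, 1 ≤ i → Kc 5 i ≤ 2^i * (i+4).factorial := by
  intro i hi
  induction i, hi using Nat.le_induction with
  | base =>
    have h := Kc_one 2
    norm_num at h ⊢
    rw [h]
    norm_num [Nat.factorial]
  | succ i hi ih =>
    obtain ⟨j, rfl⟩ : ∃ j, i = j + 1 := ⟨i - 1, by omega⟩
    rw [show j+1+1 = j+2 by omega]
    have h := Kc_step 2 j
    norm_num at h
    have h120 : 120 ≤ (j+5).factorial := by
      calc (120:ℕ) = Nat.factorial 5 := by norm_num [Nat.factorial]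
      _ ≤ _ := Nat.factorial_le (by omega)
    have f2 : (j+6) * (j+5).factorial = (j+6).factorial := by
      have := (Nat.factorial_succ (j+5)).symm
      rw [show j+5+1 = j+6 by omega] at this
      exact this.symm
    have f1 : 20 + (j+3)*(j+5).factorial ≤ (j+6).factorial := by
      rw [← f2]; nlinarith
    calc Kc 5 (j+2) ≤ 2 * Kc 4 (j+2) + Kc 3 (j+2) * Kc 5 (j+1) := by
          rw [h]
          exact Nat.add_le_add_left (Nat.mul_le_mul_left _ (Nat.sub_le _ 2)) _
    _ ≤ 2 * (10*2^(j+2)) + (2*(j+2)+2) * (2^(j+1)*(j+5).factorial) := by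
          have h4 := K4_le (j+2) (by omega)
          have h3 := K3 (j+2) (by omega)
          rw [h3]
          exact Nat.add_le_add (by omega) (Nat.mul_le_mul_left _ ih)
    _ = 2^(j+2) * (20 + (j+3)*(j+5).factorial) := by ring
    _ ≤ 2^(j+2) * (j+6).factorial := Nat.mul_le_mul_left _ f1
    _ = 2^(j+2) * (j+2+4).factorial := by rw [show j+6 = j+2+4 by omega]

lemma six_le_A (r : ℕ) (hr : 2 ≤ r) : 6 ≤ 6 ^ (r-1) := by
  calc (6:ℕ) = 6 ^ 1 := by norm_num
  _ ≤ 6 ^ (r-1) := Nat.pow_le_pow_right (by norm_num) (by omega)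

/-- Part (iii) for `dblK`. -/
lemma dblK5_le (r : ℕ) (hr : 2 ≤ r) : ∀ i, 1 ≤ i →
    dblKc r 5 i ≤ 2^i * (i + (6^(r-1)+8)).factorial := by
  set A := 6 ^ (r-1) with hA
  have hA6 : 6 ≤ A := six_le_A r hr
  intro i hi
  induction i, hi using Nat.le_induction with
  | base =>
    have h1 := dblKc_one r 2
    have h2 := dblKc_one r 1
    have h3 := dblKc_one r 0
    norm_num [dblKc_2, ← hA] at h1 h2 h3
    -- dblKc r 5 1 = 16A+7
    have e1 : (1+(A+8)).factorial = (A+9) * (A+8).factorial := by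
      rw [show 1+(A+8) = (A+8)+1 by omega, Nat.factorial_succ]
    have e2 : 40320 ≤ (A+8).factorial := by
      calc (40320:ℕ) = Nat.factorial 8 := by norm_num [Nat.factorial]
      _ ≤ _ := Nat.factorial_le (by omega)
    have e3 : (A+9) * 40320 ≤ (A+9) * (A+8).factorial := Nat.mul_le_mul_left _ e2
    have e4 : (A+9) * 40320 = 40320*A + 362880 := by ring
    have e5 : (2:ℕ)^1 = 2 := by norm_num
    omega
  | succ i hi ih =>
    obtain ⟨j, rfl⟩ : ∃ j, i = j + 1 := ⟨i - 1, by omega⟩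
    rw [show j+1+1 = j+2 by omega]
    have h := dblKc_step r 2 j
    norm_num [← hA] at h
    -- bounds on the three summands
    have b2 : dblKc r 4 (j+2) ≤ 20*(A+2)*2^(j+2) := by
      have := dblK4_le r (j+2) (by omega); rw [← hA] at this; exact this
    have b3 : dblKc r 3 (j+2) + 2 ≤ (4*A+5)*((j+6)*(j+6)) := by
      have h5 := dblK3_le r (j+2) (by omega)
      have h6 := six_choose_two (j+2)
      rw [← hA] at h5
      rw [show j+2+1 = j+3 by omega] at h5 h6
      have h7 : 3*((j+2)*(j+3)) + 4*A*(j+3) + 2 ≤ (4*A+5)*((j+6)*(j+6)) := by nlinarith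
      omega
    have b4 : Kc 5 (j+1) ≤ 2^(j+1) * (j+5).factorial := by
      have := K5_le (j+1) (by omega); rw [show j+1+4 = j+5 by omega] at this; exact this
    -- key factorial facts
    have kf1 : (j+5).factorial * (j+6)^(A+5) ≤ (j+2+(A+8)).factorial := by
      have h9 := Nat.factorial_mul_pow_le_factorial (m := j+5) (n := A+5)
      rw [show j+5+(A+5) = j+2+(A+8) by omega] at h9
      rw [show j+5+1 = j+6 by omega] at h9
      exact h9
    have kp : (4*A+5)*((j+6)*(j+6)) ≤ (j+6)^(A+5) := by
      have p1 : (j+6)^(A+5) = (j+6)*(j+6) * (j+6)^(A+3) := by ring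
      have p2 : (6:ℕ)^(A+3) ≤ (j+6)^(A+3) := Nat.pow_le_pow_left (by omega) _
      have p3 : 216*(A+1) ≤ 6^(A+3) := by
        have : A + 1 ≤ 6 ^ A := Nat.lt_pow_self (n := A) (by norm_num)
        calc 216*(A+1) ≤ 216*6^A := Nat.mul_le_mul_left _ this
        _ = 6^(A+3) := by ring
      calc (4*A+5)*((j+6)*(j+6)) ≤ (216*(A+1))*((j+6)*(j+6)) := by nlinarith
      _ ≤ (6^(A+3))*((j+6)*(j+6)) := Nat.mul_le_mul_right _ p3
      _ ≤ ((j+6)^(A+3))*((j+6)*(j+6)) := Nat.mul_le_mul_right _ p2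
      _ = (j+6)^(A+5) := by ring
    have m1 : (4*A+5)*((j+6)*(j+6))*(j+5).factorial ≤ (j+2+(A+8)).factorial := by
      calc (4*A+5)*((j+6)*(j+6))*(j+5).factorial ≤ (j+6)^(A+5)*(j+5).factorial :=
            Nat.mul_le_mul_right _ kp
      _ = (j+5).factorial * (j+6)^(A+5) := by ring
      _ ≤ _ := kf1
    have m2 : (j+1+(A+8)).factorial + 80*(A+2) ≤ (j+2+(A+8)).factorial := by
      have e1 : (j+2+(A+8)).factorial = (j+1+(A+8)+1) * (j+1+(A+8)).factorial := by
        rw [show j+2+(A+8) = (j+1+(A+8))+1 by omega, Nat.factorial_succ]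
      have e2 : (A+9).factorial ≤ (j+1+(A+8)).factorial := Nat.factorial_le (by omega)
      have e3 : (A+9) * 40320 ≤ (A+9).factorial := by
        rw [Nat.factorial_succ]
        exact Nat.mul_le_mul_left _ (by
          calc (40320:ℕ) = Nat.factorial 8 := by norm_num [Nat.factorial]
          _ ≤ _ := Nat.factorial_le (by omega))
      have e4 : (A+9) * 40320 = 40320*A + 362880 := by ring
      have e5 : 2 * (j+1+(A+8)).factorial ≤ (j+1+(A+8)+1) * (j+1+(A+8)).factorial :=
        Nat.mul_le_mul_right _ (by omega)
      generalize (j+1+(A+8)).factorial = F1 at *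
      generalize (j+2+(A+8)).factorial = F2 at *
      generalize (A+9).factorial = F3 at *
      nlinarith
    -- combine
    have main : dblKc r 5 (j+2) ≤
        2^(j+1) * ((j+1+(A+8)).factorial + 80*(A+2) + (4*A+5)*((j+6)*(j+6))*(j+5).factorial) := by
      rw [h]
      have c1 : dblKc r 5 (j+1) ≤ 2^(j+1) * (j+1+(A+8)).factorial := ih
      have c2 : 2 * dblKc r 4 (j+2) ≤ 2^(j+1) * (80*(A+2)) := by
        have : 2 * dblKc r 4 (j+2) ≤ 2 * (20*(A+2)*2^(j+2)) := by omega
        calc 2 * dblKc r 4 (j+2) ≤ 2 * (20*(A+2)*2^(j+2)) := this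
        _ = 2^(j+1) * (80*(A+2)) := by ring
      have c3 : (dblKc r 3 (j+2) + 2) * Kc 5 (j+1) ≤
          2^(j+1) * ((4*A+5)*((j+6)*(j+6))*(j+5).factorial) := by
        calc (dblKc r 3 (j+2) + 2) * Kc 5 (j+1)
            ≤ ((4*A+5)*((j+6)*(j+6))) * (2^(j+1) * (j+5).factorial) :=
              Nat.mul_le_mul b3 b4
        _ = 2^(j+1) * ((4*A+5)*((j+6)*(j+6))*(j+5).factorial) := by ring
      calc dblKc r 5 (j+1) + 2 * dblKc r 4 (j+2) + (dblKc r 3 (j+2) + 2) * Kc 5 (j+1)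
          ≤ 2^(j+1) * (j+1+(A+8)).factorial + 2^(j+1) * (80*(A+2))
            + 2^(j+1) * ((4*A+5)*((j+6)*(j+6))*(j+5).factorial) := by
            exact Nat.add_le_add (Nat.add_le_add c1 c2) c3
      _ = 2^(j+1) * ((j+1+(A+8)).factorial + 80*(A+2) + (4*A+5)*((j+6)*(j+6))*(j+5).factorial) := by ring
    calc dblKc r 5 (j+2) ≤
        2^(j+1) * ((j+1+(A+8)).factorial + 80*(A+2) + (4*A+5)*((j+6)*(j+6))*(j+5).factorial) := main
    _ ≤ 2^(j+1) * (2 * (j+2+(A+8)).factorial) := Nat.mul_le_mul_left _ (by omega)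
    _ = 2^(j+2) * (j+2+(A+8)).factorial := by ring

end KDK
namespace KDK

/-- Inductive bound shape, even levels: `s = 2t+2`. -/
def EvenB (r t C : ℕ) : Prop :=
  ∀ i, 1 ≤ i → Kc (2*t+2) i ≤ 2^((i+C).choose t) ∧ dblKc r (2*t+2) i ≤ 2^((i+C).choose t)

/-- Inductive bound shape, odd levels: `s = 2t+3`. -/
def OddB (r t C : ℕ) : Prop :=
  ∀ i, 1 ≤ i → Kc (2*t+3) i ≤ 2^((i+C).choose t * (Nat.log 2 (i+1) + C))
    ∧ dblKc r (2*t+3) i ≤ 2^((i+C).choose t * (Nat.log 2 (i+1) + C))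

lemma even_step (r t Ce Co : ℕ) (ht : 1 ≤ t) (hCe : t+2 ≤ Ce) (hCo : t+2 ≤ Co)
    (He : EvenB r t Ce) (Ho : OddB r t Co) :
    ∃ C, t+3 ≤ C ∧ EvenB r (t+1) C := by
  obtain ⟨C, hC⟩ : ∃ C, C = Ce + Co + (1+Co).choose t * (1+Co) + (t+1)*Co + 2*(t+1)*(t+1) + 8*(t+1) + 10 :=
    ⟨_, rfl⟩
  have e3 : 2*(t+1)*(t+1) = 2*((t+1)*(t+1)) := by ring
  have e4 : t+1 ≤ (t+1)*(t+1) := Nat.le_mul_of_pos_left _ (by omega)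
  have hCt : 3*t + 12 ≤ C := by omega
  -- the key inequality absorbing the odd (log) factor into the next binomial level
  have key3 : ∀ i, 1 ≤ i →
      (i+Co).choose t * (Nat.log 2 (i+1) + Co) + 3 ≤ (i+C).choose (t+1) := by
    intro i hi
    obtain ⟨m, hm⟩ : ∃ m, i + C = m + 1 := ⟨i+C-1, by omega⟩
    have hmul : (m+1) * m.choose t = (m+1).choose (t+1) * (t+1) := Nat.add_one_mul_choose_eq m t
    have hb : (i+Co).choose t ≤ m.choose t := Nat.choose_le_choose t (by omega)
    have hpos : 1 ≤ m.choose t := choose_pos' m t (by omega)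
    have hlog := log_linear (t+1) i hi
    have hstep : (i+Co).choose t * (Nat.log 2 (i+1) + Co) + 3
        ≤ m.choose t * (Nat.log 2 (i+1) + Co) + 3 * m.choose t := by
      have h1 := Nat.mul_le_mul_right (Nat.log 2 (i+1) + Co) hb
      omega
    have h2 : (Nat.log 2 (i+1) + Co + 3) * (t+1) ≤ m+1 := by
      have e : (Nat.log 2 (i+1) + Co + 3) * (t+1)
          = (t+1) * Nat.log 2 (i+1) + (t+1)*Co + 3*t + 3 := by ring
      omega
    have main : ((i+Co).choose t * (Nat.log 2 (i+1) + Co) + 3) * (t+1)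
        ≤ (m+1).choose (t+1) * (t+1) := by
      calc ((i+Co).choose t * (Nat.log 2 (i+1) + Co) + 3) * (t+1)
          ≤ (m.choose t * (Nat.log 2 (i+1) + Co) + 3 * m.choose t) * (t+1) :=
            Nat.mul_le_mul_right _ hstep
      _ = m.choose t * ((Nat.log 2 (i+1) + Co + 3) * (t+1)) := by ring
      _ ≤ m.choose t * (m+1) := Nat.mul_le_mul_left _ h2
      _ = (m+1) * m.choose t := by ring
      _ = (m+1).choose (t+1) * (t+1) := hmul
    have := Nat.le_of_mul_le_mul_right main (by omega : 0 < t+1)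
    rw [hm]
    exact this
  have keyD : ∀ n : ℕ, (n+2+Ce).choose t + 4 ≤ (n+1+C).choose t := by
    intro n
    have h1 := choose_add_ge (n+2+Ce) t ht (by omega) 4
    have h2 : (n+2+Ce+4).choose t ≤ (n+1+C).choose t :=
      Nat.choose_le_choose t (by omega)
    omega
  have keyD2 : ∀ n : ℕ, 2 ≤ (n+1+C).choose t := by
    intro n
    have := choose_ge (n+1+C) t ht (by omega)
    omega
  have hPas : ∀ n : ℕ, (n+2+C).choose (t+1) = (n+1+C).choose (t+1) + (n+1+C).choose t := by
    intro n
    have h := Nat.choose_succ_succ' (n+1+C) t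
    rw [show n+1+C+1 = n+2+C by omega] at h
    omega
  refine ⟨C, by omega, ?_⟩
  intro i hi
  rw [show 2*(t+1)+2 = 2*t+1+3 by ring]
  induction i, hi using Nat.le_induction with
  | base =>
    have hch : 1 + C ≤ (1+C).choose (t+1) + t := by
      have h := le_choose_add t (1+C-t)
      rw [show 1+C-t+t = 1+C by omega] at h
      omega
    constructor
    · rw [Kc_one (2*t+1)]
      exact Nat.pow_le_pow_right (by norm_num) (by omega)
    · rw [dblKc_one r (2*t+1)]
      have hD := (Ho 1 (by omega)).2
      rw [show 2*t+3 = 2*t+1+2 by ring] at hD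
      set E := (1+Co).choose t * (Nat.log 2 (1+1) + Co) with hE
      have hl : Nat.log 2 (1+1) = 1 := by
        rw [Nat.log_eq_one_iff]; norm_num
      have hE2 : E ≤ (1+Co).choose t * (1+Co) := by rw [hE, hl]
      have hEB : E + 2 ≤ (1+C).choose (t+1) := by omega
      have h1 : 1 ≤ (2:ℕ)^E := Nat.one_le_two_pow
      have h2 : (2:ℕ)^(E+2) = 4 * 2^E := by ring
      have h3 : (2:ℕ)^(E+2) ≤ 2^((1+C).choose (t+1)) :=
        Nat.pow_le_pow_right (by norm_num) hEB
      omega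
  | succ i hi ih =>
    obtain ⟨j, rfl⟩ : ∃ j, i = j + 1 := ⟨i - 1, by omega⟩
    rw [show j+1+1 = j+2 by omega] at *
    obtain ⟨hK1, hK2⟩ := ih
    have hHo := Ho (j+2) (by omega)
    rw [show 2*t+3 = 2*t+1+2 by ring] at hHo
    obtain ⟨hHoK, _⟩ := hHo
    have hHe := He (j+2) (by omega)
    rw [show 2*t+2 = 2*t+1+1 by ring] at hHe
    obtain ⟨hHeK, hHeD⟩ := hHe
    set O := (j+2+Co).choose t * (Nat.log 2 (j+2+1) + Co) with hO
    set E := (j+2+Ce).choose t with hEe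
    set B1 := (j+1+C).choose (t+1) with hB1
    set B2 := (j+2+C).choose (t+1) with hB2
    have hkey3 := key3 (j+2) (by omega)
    have hkeyD := keyD j
    have hkeyD2 := keyD2 j
    have hpas := hPas j
    constructor
    · calc Kc (2*t+1+3) (j+2)
          ≤ 2 * Kc (2*t+1+2) (j+2) + Kc (2*t+1+1) (j+2) * Kc (2*t+1+3) (j+1) := by
            rw [Kc_step (2*t+1) j]
            exact Nat.add_le_add_left (Nat.mul_le_mul_left _ (Nat.sub_le _ 2)) _
      _ ≤ 2 * 2^O + 2^E * 2^B1 :=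
            Nat.add_le_add (Nat.mul_le_mul_left _ hHoK) (Nat.mul_le_mul hHeK hK1)
      _ = 2^(O+1) + 2^(E+B1) := by rw [pow_add, pow_add]; ring
      _ ≤ 2^B2 := two_pow_add_le (by omega) (by omega)
    · calc dblKc r (2*t+1+3) (j+2)
          = dblKc r (2*t+1+3) (j+1) + 2*dblKc r (2*t+1+2) (j+2)
            + (dblKc r (2*t+1+1) (j+2) + 2) * Kc (2*t+1+3) (j+1) := dblKc_step r (2*t+1) j
      _ ≤ 2^B1 + 2 * 2^O + (2^E + 2) * 2^B1 := by
            have hd := (Ho (j+2) (by omega)).2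
            rw [show 2*t+3 = 2*t+1+2 by ring] at hd
            exact Nat.add_le_add (Nat.add_le_add hK2 (Nat.mul_le_mul_left _ hd))
              (Nat.mul_le_mul (by omega) hK1)
      _ ≤ 2^B1 + 2^(O+1) + 2^(E+2) * 2^B1 := by
            have h1 : 1 ≤ (2:ℕ)^E := Nat.one_le_two_pow
            have h2 : (2:ℕ)^(E+2) = 4 * 2^E := by ring
            have h3 : 2 * (2:ℕ)^O = 2^(O+1) := by ring
            have h4 : (2^E + 2) * (2:ℕ)^B1 ≤ 2^(E+2) * 2^B1 :=
              Nat.mul_le_mul_right _ (by omega)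
            omega
      _ = 2^B1 + 2^(O+1) + 2^(E+2+B1) := by rw [pow_add, pow_add]; ring
      _ ≤ 2^B2 := two_pow_add3_le (by omega) (by omega) (by omega)

lemma odd_step (r t Ce Co : ℕ) (ht : 1 ≤ t) (hCe : t+3 ≤ Ce) (hCo : t+2 ≤ Co)
    (He : EvenB r (t+1) Ce) (Ho : OddB r t Co) :
    ∃ C, t+3 ≤ C ∧ OddB r (t+1) C := by
  obtain ⟨C, hC⟩ : ∃ C, C = Ce + Co + 2*t + 12 := ⟨_, rfl⟩
  refine ⟨C, by omega, ?_⟩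
  intro i hi
  rw [show 2*(t+1)+3 = 2*t+2+3 by ring]
  induction i, hi using Nat.le_induction with
  | base =>
    have hch : 1 ≤ (1+C).choose (t+1) := choose_pos' _ _ (by omega)
    have hl : Nat.log 2 (1+1) = 1 := by
      rw [Nat.log_eq_one_iff]; norm_num
    have hprod : 1 + C ≤ (1+C).choose (t+1) * (Nat.log 2 (1+1) + C) := by
      rw [hl]
      calc 1 + C = 1 * (1+C) := by ring
      _ ≤ (1+C).choose (t+1) * (1+C) := Nat.mul_le_mul_right _ hch
    constructor
    · rw [Kc_one (2*t+2)]
      refine Nat.pow_le_pow_right (by norm_num) (by omega)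
    · rw [dblKc_one r (2*t+2)]
      have hD := (He 1 (by omega)).2
      rw [show 2*(t+1)+2 = 2*t+2+2 by ring] at hD
      set Ee := (1+Ce).choose (t+1) with hEe
      have hb : Ee ≤ (1+C).choose (t+1) := Nat.choose_le_choose _ (by omega)
      have hEB : Ee + 2 ≤ (1+C).choose (t+1) * (Nat.log 2 (1+1) + C) := by
        rw [hl]
        have h1 : (1+C).choose (t+1) * 4 ≤ (1+C).choose (t+1) * (1+C) :=
          Nat.mul_le_mul_left _ (by omega)
        have h2 : (1+C).choose (t+1) * 4
            = (1+C).choose (t+1) + (1+C).choose (t+1) + (1+C).choose (t+1)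
              + (1+C).choose (t+1) := by ring
        omega
      have h1 : 1 ≤ (2:ℕ)^Ee := Nat.one_le_two_pow
      have h2 : (2:ℕ)^(Ee+2) = 4 * 2^Ee := by ring
      have h3 : (2:ℕ)^(Ee+2) ≤ 2^((1+C).choose (t+1) * (Nat.log 2 (1+1) + C)) :=
        Nat.pow_le_pow_right (by norm_num) hEB
      omega
  | succ i hi ih =>
    obtain ⟨j, rfl⟩ : ∃ j, i = j + 1 := ⟨i - 1, by omega⟩
    rw [show j+1+1 = j+2 by omega] at *
    obtain ⟨hK1, hK2⟩ := ih
    have hHe := He (j+2) (by omega)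
    rw [show 2*(t+1)+2 = 2*t+2+2 by ring] at hHe
    obtain ⟨hHeK, hHeD⟩ := hHe
    have hHo := Ho (j+2) (by omega)
    rw [show 2*t+3 = 2*t+2+1 by ring] at hHo
    obtain ⟨hHoK, hHoD⟩ := hHo
    set L2 := Nat.log 2 (j+2) with hL2
    set L3 := Nat.log 2 (j+2+1) with hL3
    set Oo := (j+2+Co).choose t * (L3 + Co) with hOo
    set Ee := (j+2+Ce).choose (t+1) with hEe
    set b1 := (j+1+C).choose (t+1) with hb1
    set b2 := (j+2+C).choose (t+1) with hb2
    set d := (j+1+C).choose t with hd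
    set E1 := b1 * (L2 + C) with hE1
    set E2 := b2 * (L3 + C) with hE2
    -- Pascal and difference bound
    have hpas : b2 = b1 + d := by
      rw [hb2, hb1, hd]
      have h := Nat.choose_succ_succ' (j+1+C) t
      rw [show j+1+C+1 = j+2+C by omega] at h
      omega
    have hdpos : 1 ≤ d := choose_pos' _ _ (by omega)
    have hb1pos : 1 ≤ b1 := choose_pos' _ _ (by omega)
    have hlog23 : L3 ≤ L2 + 1 := log_succ_le (j+2) (by omega)
    have hlogmono : L2 ≤ L3 := Nat.log_mono_right (by omega)
    have hdiff : E1 + d * (L2 + C) ≤ E2 := by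
      have h1 : (b1 + d) * (L2 + C) ≤ (b1 + d) * (L3 + C) :=
        Nat.mul_le_mul_left _ (by omega)
      have h2 : (b1 + d) * (L2 + C) = b1 * (L2+C) + d * (L2+C) := by ring
      rw [hE2, hpas]
      omega
    -- absorb the lower odd level into the difference
    have hOod : Oo + 5 ≤ d * (L2 + C) := by
      have ha : (j+2+Co).choose t ≤ d := Nat.choose_le_choose t (by omega)
      have h1 : (j+2+Co).choose t * (L3 + Co) ≤ d * (L3 + Co) :=
        Nat.mul_le_mul_right _ ha
      have h2 : d * (L3 + Co + 5) ≤ d * (L2 + C) :=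
        Nat.mul_le_mul_left _ (by omega)
      have h3 : d * (L3 + Co + 5) = d * (L3 + Co) + 5*d := by ring
      omega
    -- the even level at t+1 is dominated
    have hEeB : Ee + 3 ≤ E2 := by
      have h1 : Ee ≤ b2 := Nat.choose_le_choose _ (by omega)
      have h2 : b2 * 4 ≤ b2 * (L3 + C) := Nat.mul_le_mul_left _ (by omega)
      have h3 : b2 * 4 = b2 + b2 + b2 + b2 := by ring
      have hb2pos : 1 ≤ b2 := by omega
      omega
    constructor
    · calc Kc (2*t+2+3) (j+2)
          ≤ 2 * Kc (2*t+2+2) (j+2) + Kc (2*t+2+1) (j+2) * Kc (2*t+2+3) (j+1) := by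
            rw [Kc_step (2*t+2) j]
            exact Nat.add_le_add_left (Nat.mul_le_mul_left _ (Nat.sub_le _ 2)) _
      _ ≤ 2 * 2^Ee + 2^Oo * 2^E1 :=
            Nat.add_le_add (Nat.mul_le_mul_left _ hHeK) (Nat.mul_le_mul hHoK hK1)
      _ = 2^(Ee+1) + 2^(Oo+E1) := by rw [pow_add, pow_add]; ring
      _ ≤ 2^E2 := two_pow_add_le (by omega) (by omega)
    · calc dblKc r (2*t+2+3) (j+2)
          = dblKc r (2*t+2+3) (j+1) + 2*dblKc r (2*t+2+2) (j+2)
            + (dblKc r (2*t+2+1) (j+2) + 2) * Kc (2*t+2+3) (j+1) := dblKc_step r (2*t+2) j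
      _ ≤ 2^E1 + 2 * 2^Ee + (2^Oo + 2) * 2^E1 :=
            Nat.add_le_add (Nat.add_le_add hK2 (Nat.mul_le_mul_left _ hHeD))
              (Nat.mul_le_mul (by omega) hK1)
      _ ≤ 2^E1 + 2^(Ee+1) + 2^(Oo+2) * 2^E1 := by
            have h1 : 1 ≤ (2:ℕ)^Oo := Nat.one_le_two_pow
            have h2 : (2:ℕ)^(Oo+2) = 4 * 2^Oo := by ring
            have h3 : 2 * (2:ℕ)^Ee = 2^(Ee+1) := by ring
            have h4 : (2^Oo + 2) * (2:ℕ)^E1 ≤ 2^(Oo+2) * 2^E1 :=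
              Nat.mul_le_mul_right _ (by omega)
            omega
      _ = 2^E1 + 2^(Ee+1) + 2^(Oo+2+E1) := by rw [pow_add, pow_add]; ring
      _ ≤ 2^E2 := two_pow_add3_le (by omega) (by omega) (by omega)

end KDK
namespace KDK

lemma coef_le (r : ℕ) (hr : 2 ≤ r) : 20 * (6^(r-1) + 2) ≤ 2^(3*r+4) := by
  have h6 : (6:ℕ)^(r-1) ≤ 2^(3*(r-1)) := by
    calc (6:ℕ)^(r-1) ≤ 8^(r-1) := Nat.pow_le_pow_left (by norm_num) _
    _ = 2^(3*(r-1)) := by rw [pow_mul]; norm_num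
  have h2 : (2:ℕ)^(3*r+4) = 128 * 2^(3*(r-1)) := by
    have : (2:ℕ)^(3*r+4) = 2^(3*(r-1)+7) := by congr 1; omega
    rw [this, pow_add]; ring
  have h3 : 1 ≤ (2:ℕ)^(3*(r-1)) := Nat.one_le_two_pow
  omega

lemma even_base (r : ℕ) (hr : 2 ≤ r) : ∃ C, 1+2 ≤ C ∧ EvenB r 1 C := by
  refine ⟨3*r+4, by omega, ?_⟩
  intro i hi
  rw [show 2*1+2 = 4 by norm_num]
  rw [Nat.choose_one_right]
  have hsplit : (2:ℕ)^(i+(3*r+4)) = 2^(3*r+4) * 2^i := by rw [pow_add]; ring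
  constructor
  · have h := K4_le i hi
    have h16 : (10:ℕ) * 2^i ≤ 16 * 2^i := Nat.mul_le_mul_right _ (by norm_num)
    have hc := coef_le r hr
    have h6 : 1 ≤ (6:ℕ)^(r-1) := Nat.one_le_pow _ _ (by norm_num)
    have hmul : 16 * (2:ℕ)^i ≤ 2^(3*r+4) * 2^i := Nat.mul_le_mul_right _ (by omega)
    omega
  · have h := dblK4_le r i hi
    have hc := coef_le r hr
    have hmul : 20 * (6^(r-1)+2) * (2:ℕ)^i ≤ 2^(3*r+4) * 2^i := Nat.mul_le_mul_right _ hc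
    omega

lemma pow_fact_le (i C5 : ℕ) (hi : 1 ≤ i) (hC5 : 1 ≤ C5) :
    2^i * (i+C5).factorial ≤
      2^((i + (C5 + Nat.log 2 C5 + 3)) * (Nat.log 2 (i+1) + (C5 + Nat.log 2 C5 + 3))) := by
  set LC := Nat.log 2 C5 with hLC
  set Li := Nat.log 2 (i+1) with hLi
  set n := i + C5 with hn
  have hf : n.factorial ≤ n^n := Nat.factorial_le_pow n
  have hn2 : n ≤ 2^(Nat.log 2 n + 1) := le_of_lt (Nat.lt_pow_succ_log_self (by norm_num) n)
  have hLn : Nat.log 2 n ≤ Li + LC + 1 := by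
    have h1 : n ≤ (i+1) * C5 := by
      have : i * 1 ≤ i * C5 := Nat.mul_le_mul_left i hC5
      have e : (i+1) * C5 = i * C5 + C5 := by ring
      omega
    have h2 : Nat.log 2 n ≤ Nat.log 2 ((i+1)*C5) := Nat.log_mono_right h1
    have h3 := log_mul_le (i+1) C5 (by omega) hC5
    omega
  have hpow : n^n ≤ 2^((Li+LC+2) * n) := by
    calc n^n ≤ (2^(Li+LC+2))^n := Nat.pow_le_pow_left (by
        calc n ≤ 2^(Nat.log 2 n + 1) := hn2
        _ ≤ 2^(Li+LC+2) := Nat.pow_le_pow_right (by norm_num) (by omega)) n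
    _ = 2^((Li+LC+2) * n) := by rw [← pow_mul]
  have hexp : i + (Li+LC+2)*n ≤ (i + (C5 + LC + 3)) * (Li + (C5 + LC + 3)) := by
    have h4 : (Li+LC+3)*n = (Li+LC+2)*n + n := by ring
    have h5 : (Li+LC+3)*n ≤ (i+(C5+LC+3)) * (Li+(C5+LC+3)) := by
      calc (Li+LC+3)*n ≤ (Li+(C5+LC+3)) * n := Nat.mul_le_mul_right _ (by omega)
      _ ≤ (Li+(C5+LC+3)) * (i+(C5+LC+3)) := Nat.mul_le_mul_left _ (by omega)
      _ = (i+(C5+LC+3)) * (Li+(C5+LC+3)) := by ring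
    omega
  calc 2^i * n.factorial ≤ 2^i * 2^((Li+LC+2)*n) :=
        Nat.mul_le_mul_left _ (le_trans hf hpow)
  _ = 2^(i + (Li+LC+2)*n) := by rw [← pow_add]
  _ ≤ _ := Nat.pow_le_pow_right (by norm_num) hexp

lemma odd_base (r : ℕ) (hr : 2 ≤ r) : ∃ C, 1+2 ≤ C ∧ OddB r 1 C := by
  have hA6 : 6 ≤ 6^(r-1) := six_le_A r hr
  refine ⟨(6^(r-1)+8) + Nat.log 2 (6^(r-1)+8) + 3, by omega, ?_⟩
  intro i hi
  rw [show 2*1+3 = 5 by norm_num]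
  rw [Nat.choose_one_right]
  have hKf : Kc 5 i ≤ 2^i * (i+(6^(r-1)+8)).factorial := by
    refine le_trans (K5_le i hi) (Nat.mul_le_mul_left _ (Nat.factorial_le (by omega)))
  have hDf : dblKc r 5 i ≤ 2^i * (i+(6^(r-1)+8)).factorial := dblK5_le r hr i hi
  have hpf := pow_fact_le i (6^(r-1)+8) hi (by omega)
  exact ⟨le_trans hKf hpf, le_trans hDf hpf⟩

lemma master (r : ℕ) (hr : 2 ≤ r) : ∀ t, 1 ≤ t →
    (∃ C, t+2 ≤ C ∧ EvenB r t C) ∧ (∃ C, t+2 ≤ C ∧ OddB r t C) := by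
  intro t ht
  induction t, ht using Nat.le_induction with
  | base => exact ⟨even_base r hr, odd_base r hr⟩
  | succ t ht ih =>
    obtain ⟨⟨Ce, hCe, He⟩, ⟨Co, hCo, Ho⟩⟩ := ih
    obtain ⟨C1, hC1, H1⟩ := even_step r t Ce Co ht hCe hCo He Ho
    obtain ⟨C2, hC2, H2⟩ := odd_step r t C1 Co ht hC1 hCo H1 Ho
    exact ⟨⟨C1, by omega, H1⟩, ⟨C2, by omega, H2⟩⟩

lemma real_bound (K b C i : ℕ) (hi : 1 ≤ i)
    (h : K ≤ 2 ^ (b * (Nat.log 2 (i+1) + C))) :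
    (K : ℝ) ≤ (2:ℝ) ^ ((b:ℝ) * (Real.logb 2 ((i:ℝ)+1) + (C:ℝ))) := by
  have h1 : (K:ℝ) ≤ ((2 ^ (b * (Nat.log 2 (i+1) + C)) : ℕ) : ℝ) := Nat.cast_le.mpr h
  have h2 : ((2 ^ (b * (Nat.log 2 (i+1) + C)) : ℕ) : ℝ)
      = (2:ℝ) ^ (((b * (Nat.log 2 (i+1) + C) : ℕ)) : ℝ) := by
    rw [Real.rpow_natCast]
    push_cast
    ring
  have hlog : ((Nat.log 2 (i+1) : ℕ) : ℝ) ≤ Real.logb 2 ((i:ℝ)+1) := by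
    rw [Real.le_logb_iff_rpow_le (by norm_num) (by positivity)]
    rw [Real.rpow_natCast]
    calc (2:ℝ) ^ (Nat.log 2 (i+1)) = ((2 ^ Nat.log 2 (i+1) : ℕ) : ℝ) := by push_cast; ring
    _ ≤ ((i+1 : ℕ) : ℝ) := Nat.cast_le.mpr (Nat.pow_log_le_self 2 (by omega))
    _ = (i:ℝ) + 1 := by push_cast; ring
  have h3 : (((b * (Nat.log 2 (i+1) + C) : ℕ)) : ℝ)
      ≤ (b:ℝ) * (Real.logb 2 ((i:ℝ)+1) + (C:ℝ)) := by
    push_cast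
    have hb : (0:ℝ) ≤ (b:ℝ) := by positivity
    exact mul_le_mul_of_nonneg_left (by linarith [hlog]) hb
  calc (K:ℝ) ≤ _ := h1
  _ = _ := h2
  _ ≤ _ := Real.rpow_le_rpow_of_exponent_le (by norm_num) h3

end KDK

/-- Closed-form bounds on the coefficients `K_{s,i}` and `dblK_{s,i}`. -/
theorem K_dblK_closed_form :
    (∀ i : ℕ, 1 ≤ i → Kc 3 i = 2 * i + 2 ∧ Kc 4 i = 10 * 2 ^ i - 4 * (i + 2)) ∧
    (∀ r : ℕ, 2 ≤ r → ∀ i : ℕ, 1 ≤ i →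
      dblKc r 3 i ≤ 6 * (i + 1).choose 2 + 4 * 6 ^ (r - 1) * (i + 1) ∧
      dblKc r 4 i ≤ 20 * (6 ^ (r - 1) + 2) * 2 ^ i) ∧
    (∀ r : ℕ, 2 ≤ r → ∃ C : ℕ, ∀ i : ℕ, 1 ≤ i →
      Kc 5 i ≤ 2 ^ i * Nat.factorial (i + C) ∧
      dblKc r 5 i ≤ 2 ^ i * Nat.factorial (i + C)) ∧
    (∀ s : ℕ, 4 ≤ s → Even s → ∀ r : ℕ, 2 ≤ r → ∃ C : ℕ, ∀ i : ℕ, 1 ≤ i →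
      Kc s i ≤ 2 ^ ((i + C).choose ((s - 2) / 2)) ∧
      dblKc r s i ≤ 2 ^ ((i + C).choose ((s - 2) / 2))) ∧
    (∀ s : ℕ, 5 ≤ s → Odd s → ∀ r : ℕ, 2 ≤ r → ∃ C : ℕ, ∀ i : ℕ, 1 ≤ i →
      (Kc s i : ℝ) ≤ (2 : ℝ) ^ (((i + C).choose ((s - 2) / 2) : ℝ) *
        (Real.logb 2 ((i : ℝ) + 1) + (C : ℝ))) ∧
      (dblKc r s i : ℝ) ≤ (2 : ℝ) ^ (((i + C).choose ((s - 2) / 2) : ℝ) *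
        (Real.logb 2 ((i : ℝ) + 1) + (C : ℝ)))) := by
  refine ⟨?_, ?_, ?_, ?_, ?_⟩
  · intro i hi; exact ⟨KDK.K3 i hi, KDK.K4 i hi⟩
  · intro r hr i hi; exact ⟨KDK.dblK3_le r i hi, KDK.dblK4_le r i hi⟩
  · intro r hr
    refine ⟨6^(r-1)+8, fun i hi => ⟨?_, KDK.dblK5_le r hr i hi⟩⟩
    refine le_trans (KDK.K5_le i hi) (Nat.mul_le_mul_left _ (Nat.factorial_le ?_))
    have := KDK.six_le_A r hr; omega
  · intro s hs hse r hr
    obtain ⟨m, hm⟩ := hse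
    obtain ⟨Ce, hCe, He⟩ := (KDK.master r hr (m-1) (by omega)).1
    refine ⟨Ce, fun i hi => ?_⟩
    have hs2 : (s-2)/2 = m-1 := by omega
    have hsEq : 2*(m-1)+2 = s := by omega
    rw [hs2, ← hsEq]
    exact He i hi
  · intro s hs hso r hr
    obtain ⟨m, hm⟩ := hso
    obtain ⟨Co, hCo, Ho⟩ := (KDK.master r hr (m-1) (by omega)).2
    refine ⟨Co, fun i hi => ?_⟩
    have hs2 : (s-2)/2 = m-1 := by omega
    have hsEq : 2*(m-1)+3 = s := by omega
    rw [hs2, ← hsEq]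
    obtain ⟨h1, h2⟩ := Ho i hi
    exact ⟨KDK.real_bound _ _ _ _ hi h1, KDK.real_bound _ _ _ _ hi h2⟩
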